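/- For g ≥ 3, consider the homomorphism of abelian groups ∂ : (⊕_{i=1}^{g−1} M(g)) ⊕ M(g) → M(g) defined by ∂((m_1,…,m_{g−1}), m_ρ) = Σ_{i=1}^{g−1}(T_i^{−1}(m_i) − m_i) + (R(m_ρ) − m_ρ). Writing t_{i,j} for the tuple whose i-th t-component is γ_j (all other components zero) and ρ_j for the tuple whose ρ-component is γ_j, the kernel of ∂ is generated, as an abelian group, by the following elements: (F1) t_{i,j} for i = 1,…,g−1 and j ∈ {1,…,g} with j ∉ {i, i+1}; (F2) t_{j,j} + t_{j,j+1} for j = 1,…,g−1; (F3) 2t_{j,j} + ρ_j + ρ_{j+1} for j = 1,…,g−1; (F4) 2t_{1,1} + 2t_{3,3} + ⋯ + 2t_{g−2,g−2} − ρ_g if g is odd, and 2t_{1,1} + 2t_{3,3} + ⋯ + 2t_{g−1,g−1} if g is even. -/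

import Mathlib

/-- `M(g) = ℤ^g / ⟨2(e₁ + ⋯ + e_g)⟩`, i.e. `H_1(N_g; ℤ)`. -/
def MN (g : ℕ) : Type :=
  (Fin g → ℤ) ⧸ AddSubgroup.zmultiples (fun _ => (2 : ℤ) : Fin g → ℤ)

instance (g : ℕ) : AddCommGroup (MN g) := by unfold MN; infer_instance

/-- `γ_i`, the class of `e_i` in `M(g)` (`i` is a 0-based index). -/
def γ {g : ℕ} (i : Fin g) : MN g :=
  QuotientAddGroup.mk (Pi.single i 1)

/-- The inclusion `Fin (g-1) → Fin g`. -/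
def idx {g : ℕ} (i : Fin (g-1)) : Fin g := ⟨i, by have := i.isLt; omega⟩

/-- The successor map `Fin (g-1) → Fin g`, `i ↦ i+1`. -/
def idx1 {g : ℕ} (i : Fin (g-1)) : Fin g := ⟨(i : ℕ) + 1, by have := i.isLt; omega⟩

/-- The formulas defining the automorphisms `T_i` on the generators `γ_j` of `M(g)`. -/
def IsT {g : ℕ} (T : Fin (g-1) → AddAut (MN g)) : Prop :=
  ∀ i : Fin (g-1),
    T i (γ (idx i)) = - γ (idx1 i) ∧
    T i (γ (idx1 i)) = γ (idx i) + (2 : ℤ) • γ (idx1 i) ∧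
    ∀ j : Fin g, j ≠ idx i → j ≠ idx1 i → T i (γ j) = γ j

/-- The formula defining the automorphism `S` on the generators `γ_j` of `M(g)`
(with 1-based index `j`, `S(γ_j) = (-1)^j (2γ_1 + ⋯ + 2γ_{j-1} + γ_j)`). -/
def IsS {g : ℕ} (S : AddAut (MN g)) : Prop :=
  ∀ j : Fin g,
    S (γ j) = (-1 : ℤ) ^ ((j : ℕ) + 1) • ((2 : ℤ) • (∑ k ∈ Finset.Iio j, γ k) + γ j)

/-- `t_{i,j} = [t_i] ⊗ γ_j` in `(⊕_{i=1}^{g-1} M(g)) ⊕ M(g)`. -/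
def tt {g : ℕ} (i : Fin (g-1)) (j : Fin g) : (Fin (g-1) → MN g) × MN g :=
  (Pi.single i (γ j), 0)

/-- `ρ_j = [ρ] ⊗ γ_j` in `(⊕_{i=1}^{g-1} M(g)) ⊕ M(g)`. -/
def rr {g : ℕ} (j : Fin g) : (Fin (g-1) → MN g) × MN g :=
  (0, γ j)

/-- The generators (F1)-(F4) of the kernel (all indices in the names are 1-based, so e.g.
`t_{j,j}` is `tt j (idx j)`). -/
def kerGens (g : ℕ) (hg : 3 ≤ g) : Set ((Fin (g-1) → MN g) × MN g) :=
  -- (F1)  t_{i,j} for j ∉ {i, i+1}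
  {x | ∃ (i : Fin (g-1)) (j : Fin g), (j : ℕ) ≠ i ∧ (j : ℕ) ≠ (i : ℕ) + 1 ∧ x = tt i j} ∪
  -- (F2)  t_{j,j} + t_{j,j+1}
  {x | ∃ j : Fin (g-1), x = tt j (idx j) + tt j (idx1 j)} ∪
  -- (F3)  2t_{j,j} + ρ_j + ρ_{j+1}
  {x | ∃ j : Fin (g-1), x = (2 : ℤ) • tt j (idx j) + rr (idx j) + rr (idx1 j)} ∪
  -- (F4)  2t_{1,1} + 2t_{3,3} + ⋯ (+ possibly −ρ_g)
  {(∑ j : Fin (g-1), if Even (j : ℕ) then (2 : ℤ) • tt j (idx j) else 0) +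
      (if Odd g then -(rr (⟨g-1, by omega⟩ : Fin g)) else 0)}

section aux
open Finset

abbrev GG (g : ℕ) : Type := (Fin (g-1) → MN g) × MN g

def mkH (g : ℕ) : (Fin g → ℤ) →+ MN g := QuotientAddGroup.mk' _

lemma γ_eq {g : ℕ} (i : Fin g) : γ i = mkH g (Pi.single i 1) := rfl

lemma mkH_eq_sum {g : ℕ} (c : Fin g → ℤ) : mkH g c = ∑ j, c j • γ j := by
  have : c = ∑ j, Pi.single j (c j) := (Finset.univ_sum_single c).symm
  rw [this, map_sum]
  refine Finset.sum_congr rfl fun j _ => ?_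
  rw [γ_eq, ← map_zsmul]
  congr 1
  simp [← Pi.single_smul]

lemma mkH_eq_zero_iff {g : ℕ} (c : Fin g → ℤ) : mkH g c = 0 ↔ ∃ k : ℤ, ∀ j, c j = 2 * k := by
  show (QuotientAddGroup.mk c : MN g) = 0 ↔ _
  rw [QuotientAddGroup.eq_zero_iff, AddSubgroup.mem_zmultiples_iff]
  constructor
  · rintro ⟨k, hk⟩; exact ⟨k, fun j => by rw [← congrFun hk j]; simp [mul_comm]⟩
  · rintro ⟨k, hk⟩; exact ⟨k, funext fun j => by simp [hk j, mul_comm]⟩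

lemma mkH_surj {g : ℕ} : Function.Surjective (mkH g) := QuotientAddGroup.mk'_surjective _

lemma comb_nat {A : Type*} [AddCommMonoid A] (F : ℕ → A) :
    ∀ g : ℕ, (∑ i ∈ Finset.range (g-1), if Even i then F i + F (i+1) else 0) +
      (if Odd g then F (g-1) else 0) = ∑ j ∈ Finset.range g, F j := by
  intro g
  induction g with
  | zero => simp
  | succ n ih =>
    match n, ih with
    | 0, _ => simp
    | (m+1), ih =>
      simp only [Nat.add_sub_cancel] at ih ⊢
      rw [Finset.sum_range_succ (f := F), Finset.sum_range_succ, ← ih]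
      split_ifs with h1 h2 h3 h4 h5 h6 <;>
        simp only [Nat.even_iff, Nat.odd_iff] at * <;> first | omega | abel

lemma comb_fin {g : ℕ} (hg : 1 ≤ g) {A : Type*} [AddCommMonoid A] (f : Fin g → A) :
    (∑ i : Fin (g-1), if Even (i:ℕ) then f (idx i) + f (idx1 i) else 0) +
      (if Odd g then f ⟨g-1, by omega⟩ else 0) = ∑ j, f j := by
  set F : ℕ → A := fun n => if h : n < g then f ⟨n, h⟩ else 0 with hF
  have key : ∀ (n : ℕ) (h : n < g), F n = f ⟨n, h⟩ := fun n h => dif_pos h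
  have h1 : ∑ i : Fin (g-1), (if Even (i:ℕ) then f (idx i) + f (idx1 i) else 0) =
      ∑ i ∈ Finset.range (g-1), if Even i then F i + F (i+1) else 0 := by
    rw [Finset.sum_range fun n => if Even n then F n + F (n+1) else 0]
    refine Finset.sum_congr rfl fun i _ => ?_
    have hi := i.isLt
    rw [key i (by omega), key ((i:ℕ)+1) (by omega)]; rfl
  have h2 : ∑ j : Fin g, f j = ∑ j ∈ Finset.range g, F j := by
    rw [Finset.sum_range F]
    refine Finset.sum_congr rfl fun j _ => ?_
    rw [key j j.isLt]
  have h3 : F (g-1) = f ⟨g-1, by omega⟩ := key _ (by omega)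
  rw [h1, h2, ← h3, comb_nat]

variable {g : ℕ}

lemma idx_ne_idx1 (i : Fin (g-1)) : idx i ≠ idx1 i := by
  simp [idx, idx1, Fin.ext_iff]

lemma Tinv_a {T : Fin (g-1) → AddAut (MN g)} (hT : IsT T) (i : Fin (g-1)) :
    (-(T i)) (γ (idx i)) = (2:ℤ) • γ (idx i) + γ (idx1 i) := by
  have h1 := (hT i).1; have h2 := (hT i).2.1
  refine (T i).toEquiv.injective ?_
  show T i _ = T i _
  rw [AddAut.apply_neg_self, map_add, map_zsmul, h1, h2]; abel

lemma Tinv_b {T : Fin (g-1) → AddAut (MN g)} (hT : IsT T) (i : Fin (g-1)) :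
    (-(T i)) (γ (idx1 i)) = - γ (idx i) := by
  have h1 := (hT i).1
  refine (T i).toEquiv.injective ?_
  show T i _ = T i _
  rw [AddAut.apply_neg_self, map_neg, h1, neg_neg]

lemma Tinv_c {T : Fin (g-1) → AddAut (MN g)} (hT : IsT T) (i : Fin (g-1)) {j : Fin g}
    (h1 : j ≠ idx i) (h2 : j ≠ idx1 i) : (-(T i)) (γ j) = γ j := by
  have h := (hT i).2.2 j h1 h2
  refine (T i).toEquiv.injective ?_
  show T i _ = T i _
  rw [AddAut.apply_neg_self, h]

/-- `x ↦ (Pi.single i x, 0)` as a hom. -/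
def σσ (i : Fin (g-1)) : MN g →+ GG g where
  toFun x := (Pi.single i x, 0)
  map_zero' := by simp
  map_add' a b := by simp [Pi.single_add, Prod.ext_iff]

/-- `x ↦ (0, x)` as a hom. -/
def ιι : MN g →+ GG g := AddMonoidHom.inr _ _

lemma tt_eq (i : Fin (g-1)) (j : Fin g) : tt i j = σσ i (γ j) := rfl
lemma rr_eq (j : Fin g) : rr j = ιι (γ j) := rfl

end aux

/-- The (F4) element. -/
def F4 (g : ℕ) (hg : 3 ≤ g) : GG g :=
  (∑ j : Fin (g-1), if Even (j : ℕ) then (2 : ℤ) • tt j (idx j) else 0) +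
      (if Odd g then -(rr (⟨g-1, by omega⟩ : Fin g)) else 0)

section gens
open Finset
variable {g : ℕ} (hg : 3 ≤ g)

lemma memF1 {i : Fin (g-1)} {j : Fin g} (h1 : (j:ℕ) ≠ i) (h2 : (j:ℕ) ≠ (i:ℕ)+1) :
    tt i j ∈ kerGens g hg :=
  Or.inl (Or.inl (Or.inl ⟨i, j, h1, h2, rfl⟩))

lemma memF2 (j : Fin (g-1)) : tt j (idx j) + tt j (idx1 j) ∈ kerGens g hg :=
  Or.inl (Or.inl (Or.inr ⟨j, rfl⟩))

lemma memF3 (j : Fin (g-1)) :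
    (2 : ℤ) • tt j (idx j) + rr (idx j) + rr (idx1 j) ∈ kerGens g hg :=
  Or.inl (Or.inr ⟨j, rfl⟩)

lemma memF4 : F4 g hg ∈ kerGens g hg := Or.inr rfl

lemma sum_rr_eq : (∑ j : Fin g, rr j) = ((0 : Fin (g-1) → MN g), ∑ j : Fin g, γ j) := by
  rw [Prod.ext_iff]
  constructor
  · rw [Prod.fst_sum]; simp [rr]
  · rw [Prod.snd_sum]; rfl

lemma hSum : ((0 : Fin (g-1) → MN g), ∑ j : Fin g, γ j) ∈
    AddSubgroup.closure (kerGens g hg) := by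
  have h1 : (∑ i : Fin (g-1), if Even (i:ℕ) then
      ((2 : ℤ) • tt i (idx i) + rr (idx i) + rr (idx1 i)) else 0) ∈
      AddSubgroup.closure (kerGens g hg) := by
    refine AddSubgroup.sum_mem _ fun i _ => ?_
    split_ifs
    · exact AddSubgroup.subset_closure (memF3 hg i)
    · exact zero_mem _
  have h4 : F4 g hg ∈ AddSubgroup.closure (kerGens g hg) :=
    AddSubgroup.subset_closure (memF4 hg)
  have key : ((0 : Fin (g-1) → MN g), ∑ j : Fin g, γ j) =
      (∑ i : Fin (g-1), if Even (i:ℕ) then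
        ((2 : ℤ) • tt i (idx i) + rr (idx i) + rr (idx1 i)) else 0) - F4 g hg := by
    rw [F4, ← sum_rr_eq, ← comb_fin (by omega) rr]
    have e : (∑ i : Fin (g-1), if Even (i:ℕ) then
          ((2 : ℤ) • tt i (idx i) + rr (idx i) + rr (idx1 i)) else 0) -
        (∑ j : Fin (g-1), if Even (j:ℕ) then (2 : ℤ) • tt j (idx j) else 0) =
        (∑ i : Fin (g-1), if Even (i:ℕ) then rr (idx i) + rr (idx1 i) else 0) := by
      rw [← Finset.sum_sub_distrib]
      refine Finset.sum_congr rfl fun i _ => ?_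
      split_ifs
      · abel
      · simp
    rw [← e]
    split_ifs with h <;> abel
  rw [key]
  exact sub_mem h1 h4

end gens

section Dlem
open Finset
variable {g : ℕ} {T : Fin (g-1) → AddAut (MN g)} {R : AddAut (MN g)}
  {D : GG g →+ MN g}

lemma sum_two_smul_γ : (∑ j : Fin g, (2:ℤ) • γ j) = 0 := by
  have h := (mkH_eq_zero_iff (g := g) (fun _ => (2:ℤ))).2 ⟨1, fun _ => by norm_num⟩
  rwa [mkH_eq_sum] at h

variable (hT : IsT T) (hR : ∀ x, R x = -x)
  (hD : ∀ m, D m = (∑ i : Fin (g-1), ((-(T i)) (m.1 i) - m.1 i)) + (R m.2 - m.2))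
include hD

lemma D_tt (i : Fin (g-1)) (j : Fin g) : D (tt i j) = (-(T i)) (γ j) - γ j := by
  rw [hD]
  have h0 : R (tt i j).2 - (tt i j).2 = 0 := by simp [tt]
  rw [h0, add_zero, Finset.sum_eq_single i]
  · rw [show (tt i j).1 = Pi.single i (γ j) from rfl, Pi.single_eq_same]
  · intro b _ hb
    rw [show (tt i j).1 = Pi.single i (γ j) from rfl, Pi.single_eq_of_ne hb]
    simp
  · intro h; exact absurd (mem_univ i) h

include hR in
lemma D_rr (j : Fin g) : D (rr j) = -((2:ℤ) • γ j) := by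
  rw [hD]
  have h : ∀ i : Fin (g-1), (-(T i)) ((rr j).1 i) - (rr j).1 i = 0 := fun i => by
    simp [rr]
  rw [Finset.sum_congr rfl (fun i _ => h i), Finset.sum_const_zero, zero_add, hR]
  show -γ j - γ j = _
  rw [two_zsmul]; abel

include hR in
lemma D_snd (x : MN g) : D ((0 : Fin (g-1) → MN g), x) = -((2:ℤ) • x) := by
  rw [hD]
  simp only [Pi.zero_apply, map_zero, sub_zero, Finset.sum_const_zero, zero_add, hR]
  rw [two_zsmul]; abel

include hT hR in
lemma closure_le_ker {hg : 3 ≤ g} :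
    AddSubgroup.closure (kerGens g hg) ≤ D.ker := by
  rw [AddSubgroup.closure_le]
  rintro x (((⟨i, j, h1, h2, rfl⟩ | ⟨j, rfl⟩) | ⟨j, rfl⟩) | rfl)
  · -- F1
    rw [SetLike.mem_coe, AddMonoidHom.mem_ker, D_tt hD,
      Tinv_c hT i (fun h => h1 (by rw [h]; rfl)) (fun h => h2 (by rw [h]; rfl)), sub_self]
  · -- F2
    rw [SetLike.mem_coe, AddMonoidHom.mem_ker, map_add, D_tt hD, D_tt hD,
      Tinv_a hT, Tinv_b hT]
    abel
  · -- F3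
    rw [SetLike.mem_coe, AddMonoidHom.mem_ker, map_add, map_add, map_zsmul,
      D_tt hD, D_rr hR hD, D_rr hR hD, Tinv_a hT]
    abel
  · -- F4
    rw [SetLike.mem_coe, AddMonoidHom.mem_ker]
    show D (F4 g hg) = 0
    rw [F4, map_add, map_sum]
    have key : ∀ i : Fin (g-1), (-(T i)) (γ (idx i)) - γ (idx i) = γ (idx i) + γ (idx1 i) := by
      intro i; rw [Tinv_a hT, two_zsmul]; abel
    have e1 : ∀ i ∈ (Finset.univ : Finset (Fin (g-1))), D (if Even (i:ℕ) then (2:ℤ) • tt i (idx i) else 0) =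
        (if Even (i:ℕ) then ((2:ℤ) • γ (idx i)) + ((2:ℤ) • γ (idx1 i)) else 0) := by
      intro i _
      rw [apply_ite D, map_zero, map_zsmul, D_tt hD, key i, smul_add]
    rw [Finset.sum_congr rfl e1, apply_ite D, map_zero, map_neg, D_rr hR hD, neg_neg]
    exact (comb_fin (by omega) (fun j => (2:ℤ) • γ j)).trans sum_two_smul_γ
end Dlem

section red
open Finset AddSubgroup

lemma reduce {g : ℕ} (hg : 3 ≤ g) (m : GG g) :
    ∃ (r : Fin (g-1) → ℤ) (c : Fin g → ℤ),
      (∀ i, r i = 0 ∨ r i = 1) ∧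
      m - ((∑ i, r i • tt i (idx i)) + ((0 : Fin (g-1) → MN g), mkH g c))
        ∈ AddSubgroup.closure (kerGens g hg) := by
  classical
  set K := AddSubgroup.closure (kerGens g hg) with hK
  set π : GG g →+ GG g ⧸ K := QuotientAddGroup.mk' K with hπ
  have pi_zero : ∀ {x : GG g}, x ∈ K → π x = 0 :=
    fun h => (QuotientAddGroup.eq_zero_iff _).2 h
  choose a ha using fun i => mkH_surj (g := g) (m.1 i)
  set ε : Fin (g-1) → ℤ := fun i => a i (idx i) - a i (idx1 i) with hε
  set q : Fin (g-1) → ℤ := fun i => ε i / 2 with hq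
  set r : Fin (g-1) → ℤ := fun i => ε i % 2 with hr
  obtain ⟨c, hc⟩ := mkH_surj (g := g) (m.2 - ∑ i, q i • (γ (idx i) + γ (idx1 i)))
  refine ⟨r, c, fun i => by show ε i % 2 = 0 ∨ ε i % 2 = 1; omega, ?_⟩
  rw [← QuotientAddGroup.eq_zero_iff (N := K)]
  rw [show ((m - (∑ i, r i • tt i (idx i) + ((0 : Fin (g-1) → MN g), mkH g c)) : GG g) :
      GG g ⧸ K) = π (m - (∑ i, r i • tt i (idx i) + ((0 : Fin (g-1) → MN g), mkH g c)))
    from rfl, map_sub, sub_eq_zero]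
  show π m = π _
  -- decompose m
  have hsplit : m = (∑ i, σσ i (m.1 i)) + ιι m.2 := by
    rw [Prod.ext_iff]
    constructor
    · rw [Prod.fst_add, Prod.fst_sum]
      simp [σσ, ιι, Finset.univ_sum_single]
    · rw [Prod.snd_add, Prod.snd_sum]
      simp [σσ, ιι]
  -- per-i facts
  have hF2 : ∀ i, π (tt i (idx1 i)) = - π (tt i (idx i)) := by
    intro i
    have h := pi_zero (subset_closure (memF2 hg i))
    rw [map_add] at h
    exact (neg_eq_of_add_eq_zero_right h).symm
  have hF3 : ∀ i, (2:ℤ) • π (tt i (idx i)) = -(π (rr (idx i)) + π (rr (idx1 i))) := by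
    intro i
    have h := pi_zero (subset_closure (memF3 hg i))
    rw [map_add, map_add, map_zsmul, add_assoc] at h
    exact eq_neg_of_add_eq_zero_left h
  have hx2 : ∀ i, π (σσ i (m.1 i)) =
      r i • π (tt i (idx i)) + q i • (-(π (rr (idx i)) + π (rr (idx1 i)))) := by
    intro i
    have hsum : π (σσ i (m.1 i)) =
        a i (idx i) • π (tt i (idx i)) + a i (idx1 i) • π (tt i (idx1 i)) := by
      rw [← ha i, mkH_eq_sum, map_sum, map_sum]
      have hvanish : ∀ j ∈ (Finset.univ : Finset (Fin g)),
          j ∉ ({idx i, idx1 i} : Finset (Fin g)) →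
          π (σσ i (a i j • γ j)) = 0 := by
        intro j _ hj
        rw [Finset.mem_insert, Finset.mem_singleton] at hj
        push_neg at hj
        rw [map_zsmul, map_zsmul, ← tt_eq]
        rw [pi_zero (subset_closure (memF1 hg
          (fun hv => hj.1 (Fin.ext hv)) (fun hv => hj.2 (Fin.ext hv)))), smul_zero]
      rw [← Finset.sum_subset (Finset.subset_univ ({idx i, idx1 i} : Finset (Fin g))) hvanish,
        Finset.sum_pair (idx_ne_idx1 i)]
      rw [map_zsmul, map_zsmul, map_zsmul, map_zsmul, ← tt_eq, ← tt_eq]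
    rw [hsum, hF2 i, zsmul_neg, ← sub_eq_add_neg]
    have hdecomp : ε i = r i + q i * 2 := by
      show ε i = ε i % 2 + (ε i / 2) * 2; omega
    rw [show a i (idx i) • π (tt i (idx i)) - a i (idx1 i) • π (tt i (idx i)) =
        ε i • π (tt i (idx i)) by rw [show ε i = a i (idx i) - a i (idx1 i) from rfl,
        sub_zsmul, ← sub_eq_add_neg]]
    rw [hdecomp, add_zsmul, mul_zsmul, hF3 i]
  -- assemble
  rw [hsplit, map_add, map_sum, Finset.sum_congr rfl (fun i _ => hx2 i),
    Finset.sum_add_distrib]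
  have hρ : π (ιι m.2) = π (ιι (mkH g c)) +
      ∑ i, q i • (π (rr (idx i)) + π (rr (idx1 i))) := by
    rw [hc, map_sub, map_sub, map_sum, map_sum]
    rw [Finset.sum_congr rfl (fun i _ =>
      by rw [map_zsmul, map_zsmul, map_add, map_add, ← rr_eq, ← rr_eq] :
      ∀ i ∈ Finset.univ, π (ιι (q i • (γ (idx i) + γ (idx1 i)))) =
        q i • (π (rr (idx i)) + π (rr (idx1 i))))]
    abel
  have hn : π ((∑ i, r i • tt i (idx i)) + ((0 : Fin (g-1) → MN g), mkH g c)) =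
      (∑ i, r i • π (tt i (idx i))) + π (ιι (mkH g c)) := by
    simp only [map_add, map_sum, map_zsmul]
    rfl
  rw [hn, hρ]
  have : ∑ i, q i • (-(π (rr (idx i)) + π (rr (idx1 i)))) =
      - ∑ i, q i • (π (rr (idx i)) + π (rr (idx1 i))) := by
    rw [← Finset.sum_neg_distrib]
    exact Finset.sum_congr rfl fun i _ => zsmul_neg _ _
  rw [this]
  abel

end red

section eval
open Finset

lemma evalS1 {g : ℕ} (r : Fin (g-1) → ℤ) (p : ℕ) (hp : p < g) :
    (∑ i : Fin (g-1), r i * (Pi.single (idx i) (1:ℤ) : Fin g → ℤ) ⟨p, hp⟩) =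
      if h : p < g-1 then r ⟨p, h⟩ else 0 := by
  split_ifs with h
  · rw [Finset.sum_eq_single (⟨p, h⟩ : Fin (g-1))]
    · rw [show idx (⟨p, h⟩ : Fin (g-1)) = ⟨p, hp⟩ from rfl, Pi.single_eq_same, mul_one]
    · intro b _ hb
      rw [Pi.single_eq_of_ne, mul_zero]
      intro hv
      have h2 : p = (b:ℕ) := congrArg Fin.val hv
      exact hb (Fin.ext (show (b:ℕ) = p from h2.symm))
    · intro hmem; exact absurd (Finset.mem_univ _) hmem
  · refine Finset.sum_eq_zero fun b _ => ?_
    rw [Pi.single_eq_of_ne, mul_zero]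
    intro hv
    have h2 : p = (b:ℕ) := congrArg Fin.val hv
    have := b.isLt
    omega

lemma evalS2 {g : ℕ} (hg : 3 ≤ g) (r : Fin (g-1) → ℤ) (p : ℕ) (hp : p < g) :
    (∑ i : Fin (g-1), r i * (Pi.single (idx1 i) (1:ℤ) : Fin g → ℤ) ⟨p, hp⟩) =
      if 0 < p then r ⟨p-1, by omega⟩ else 0 := by
  split_ifs with h
  · rw [Finset.sum_eq_single (⟨p-1, by omega⟩ : Fin (g-1))]
    · rw [show idx1 (⟨p-1, by omega⟩ : Fin (g-1)) = ⟨p, hp⟩ from Fin.ext (by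
        simp only [idx1]; omega), Pi.single_eq_same, mul_one]
    · intro b _ hb
      rw [Pi.single_eq_of_ne, mul_zero]
      intro hv
      have h2 : p = (b:ℕ)+1 := congrArg Fin.val hv
      exact hb (Fin.ext (show (b:ℕ) = p-1 by omega))
    · intro hmem; exact absurd (Finset.mem_univ _) hmem
  · refine Finset.sum_eq_zero fun b _ => ?_
    rw [Pi.single_eq_of_ne, mul_zero]
    intro hv
    have h2 : p = (b:ℕ)+1 := congrArg Fin.val hv
    omega

end eval

open Finset AddSubgroup in
theorem stmt10 (g : ℕ) (hg : 3 ≤ g) (T : Fin (g-1) → AddAut (MN g)) (hT : IsT T)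
    (R : AddAut (MN g)) (hR : ∀ x, R x = -x) :
    (∃ D : ((Fin (g-1) → MN g) × MN g) →+ MN g,
      ∀ m, D m = (∑ i : Fin (g-1), ((-(T i)) (m.1 i) - m.1 i)) + (R m.2 - m.2)) ∧
    ∀ D : ((Fin (g-1) → MN g) × MN g) →+ MN g,
      (∀ m, D m = (∑ i : Fin (g-1), ((-(T i)) (m.1 i) - m.1 i)) + (R m.2 - m.2)) →
      D.ker = AddSubgroup.closure (kerGens g hg) := by
  constructor
  · refine ⟨AddMonoidHom.mk' (fun m =>
      (∑ i : Fin (g-1), ((-(T i)) (m.1 i) - m.1 i)) + (R m.2 - m.2)) ?_, fun m => rfl⟩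
    intro x y
    have e : ∀ i : Fin (g-1), (-(T i)) ((x + y).1 i) - (x + y).1 i =
        ((-(T i)) (x.1 i) - x.1 i) + ((-(T i)) (y.1 i) - y.1 i) := by
      intro i
      show (-(T i)) (x.1 i + y.1 i) - (x.1 i + y.1 i) = _
      rw [map_add]; abel
    rw [Finset.sum_congr rfl fun i _ => e i, Finset.sum_add_distrib]
    show _ + (R (x.2 + y.2) - (x.2 + y.2)) = _
    rw [map_add]
    abel
  · intro D hD
    refine le_antisymm ?_ (closure_le_ker hT hR hD (hg := hg))
    intro m hm
    rw [AddMonoidHom.mem_ker] at hm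
    obtain ⟨r, c, hr01, hmem⟩ := reduce hg m
    set n : GG g := (∑ i, r i • tt i (idx i)) + ((0 : Fin (g-1) → MN g), mkH g c) with hn
    have hDmn : D (m - n) = 0 := closure_le_ker hT hR hD (hg := hg) hmem
    have hDn : D n = 0 := by
      rw [map_sub, hm, zero_sub, neg_eq_zero] at hDmn
      exact hDmn
    -- D n = mkH u
    set u : Fin g → ℤ :=
      (∑ i, r i • ((Pi.single (idx i) (1:ℤ) : Fin g → ℤ) +
        (Pi.single (idx1 i) (1:ℤ) : Fin g → ℤ))) - (2:ℤ) • c with hu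
    have hDtt : ∀ i, D (tt i (idx i)) = γ (idx i) + γ (idx1 i) := fun i => by
      rw [D_tt hD, Tinv_a hT, two_zsmul]; abel
    have hmkHu : mkH g u = 0 := by
      have e1 : mkH g u = (∑ i, r i • (γ (idx i) + γ (idx1 i))) - (2:ℤ) • mkH g c := by
        rw [hu, map_sub, map_sum, map_zsmul]
        congr 1
      have e2 : D n = (∑ i, r i • (γ (idx i) + γ (idx1 i))) - (2:ℤ) • mkH g c := by
        rw [hn, map_add, map_sum,
          Finset.sum_congr rfl fun i (_ : i ∈ Finset.univ) => by rw [map_zsmul, hDtt i],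
          D_snd hR hD, ← sub_eq_add_neg]
      rw [e1, ← e2, hDn]
    obtain ⟨k, hk⟩ := (mkH_eq_zero_iff u).1 hmkHu
    set r' : ℕ → ℤ := fun p => if h : p < g-1 then r ⟨p, h⟩ else 0 with hr'
    have hu_eval' : ∀ (p : ℕ) (hp : p < g), u ⟨p, hp⟩ =
        r' p + (if 0 < p then r' (p-1) else 0) - 2 * c ⟨p, hp⟩ := by
      intro p hp
      rw [hu]
      rw [Pi.sub_apply, Finset.sum_apply, Pi.smul_apply, smul_eq_mul]
      have hterm : ∀ i ∈ (Finset.univ : Finset (Fin (g-1))),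
          (r i • ((Pi.single (idx i) (1:ℤ) : Fin g → ℤ) +
            (Pi.single (idx1 i) (1:ℤ) : Fin g → ℤ))) ⟨p, hp⟩ =
          r i * (Pi.single (idx i) (1:ℤ) : Fin g → ℤ) ⟨p, hp⟩ +
          r i * (Pi.single (idx1 i) (1:ℤ) : Fin g → ℤ) ⟨p, hp⟩ := fun i _ => by
        rw [Pi.smul_apply, Pi.add_apply, smul_eq_mul, mul_add]
      rw [Finset.sum_congr rfl hterm, Finset.sum_add_distrib, evalS1, evalS2 hg]
      congr 1
      congr 1
      by_cases h : 0 < p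
      · rw [if_pos h, if_pos h]
        simp only [hr']
        rw [dif_pos (show p-1 < g-1 by omega)]
      · rw [if_neg h, if_neg h]
    have hr01' : ∀ p : ℕ, r' p = 0 ∨ r' p = 1 := by
      intro p
      by_cases h : p < g-1
      · rw [show r' p = r ⟨p, h⟩ from dif_pos h]
        exact hr01 _
      · left; exact dif_neg h
    have hallr' : ∀ p : ℕ, r' p = 0 := by
      intro p
      induction p with
      | zero =>
        by_cases h : (0:ℕ) < g-1
        · have h0 := hk ⟨0, by omega⟩
          rw [hu_eval' 0 (by omega), if_neg (lt_irrefl 0)] at h0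
          have h1 := hr01' 0
          omega
        · exact dif_neg h
      | succ p ih =>
        by_cases h : p+1 < g-1
        · have h0 := hk ⟨p+1, by omega⟩
          rw [hu_eval' (p+1) (by omega), if_pos (Nat.succ_pos p),
            show p+1-1 = p from rfl, ih] at h0
          have h1 := hr01' (p+1)
          omega
        · exact dif_neg h
    have hrz : ∀ i : Fin (g-1), r i = 0 := by
      intro i
      have h2 : r' (i:ℕ) = r i := dif_pos i.isLt
      have h := hallr' i.1
      rwa [h2] at h
    have hc_all : ∀ j : Fin g, c j = -k := by
      intro j
      have h0 : u j = 2*k := hk j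
      have he : u j = r' (j:ℕ) + (if 0 < (j:ℕ) then r' ((j:ℕ)-1) else 0) - 2 * c j :=
        hu_eval' j.1 j.isLt
      rw [hallr' (j:ℕ)] at he
      split_ifs at he with h2
      · rw [hallr' ((j:ℕ)-1)] at he
        omega
      · omega
    have hnK : n ∈ AddSubgroup.closure (kerGens g hg) := by
      have h1 : (∑ i, r i • tt i (idx i)) = 0 :=
        Finset.sum_eq_zero fun i _ => by rw [hrz i, zero_smul]
      have h2 : mkH g c = (-k) • ∑ j, γ j := by
        rw [show c = fun _ => (-k) from funext hc_all, mkH_eq_sum, ← Finset.smul_sum]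
      rw [hn, h1, zero_add]
      have h3 : ((0 : Fin (g-1) → MN g), mkH g c) =
          (-k) • (((0 : Fin (g-1) → MN g), ∑ j, γ j) : GG g) := by
        rw [Prod.smul_mk, smul_zero, h2]
      rw [h3]
      exact zsmul_mem (hSum hg) _
    have hfinal : m = (m - n) + n := (sub_add_cancel m n).symm
    rw [hfinal]
    exact add_mem hmem hnK
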